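/- The joint survival function R(x₁,x₂) = 1 − (θ₁θ₃)^((x₁+1)^(−ζ)) − (θ₂θ₃)^((x₂+1)^(−ζ)) + θ₁^((x₁+1)^(−ζ)) θ₂^((x₂+1)^(−ζ)) θ₃^((min(x₁,x₂)+1)^(−ζ)) of the BDsIW distribution is totally positive of order two: for all natural numbers u₁ ≤ u₂ and v₁ ≤ v₂, R(u₁,v₁)·R(u₂,v₂) ≥ R(u₂,v₁)·R(u₁,v₂). -/

import Mathlib

open MeasureTheory ProbabilityTheory Filter Real Set

/-- CDF of the discrete inverse Weibull distribution: `F(x;θ,ζ) = θ^((x+1)^(-ζ))`. -/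
noncomputable def dsiwCDF (θ ζ : ℝ) (x : ℕ) : ℝ := θ ^ (((x : ℝ) + 1) ^ (-ζ))

/-- `θ^(x^(-ζ))` with the convention `θ^(0^(-ζ)) = 0`. -/
noncomputable def dsiwC (θ ζ : ℝ) (x : ℕ) : ℝ := if x = 0 then 0 else θ ^ ((x : ℝ) ^ (-ζ))

/-- PMF of the discrete inverse Weibull distribution. -/
noncomputable def dsiwPMF (θ ζ : ℝ) (x : ℕ) : ℝ := dsiwCDF θ ζ x - dsiwC θ ζ x


/-- The joint survival function of the BDsIW distribution. -/
noncomputable def bdsiwSurvival (θ₁ θ₂ θ₃ ζ : ℝ) (x₁ x₂ : ℕ) : ℝ :=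
  1 - dsiwCDF (θ₁ * θ₃) ζ x₁ - dsiwCDF (θ₂ * θ₃) ζ x₂
    + dsiwCDF θ₁ ζ x₁ * dsiwCDF θ₂ ζ x₂ * dsiwCDF θ₃ ζ (min x₁ x₂)


/-- Key lemma: `(1-z^c)` is reverse-rule of order 2 in `(z,c)`. -/
lemma bdsiw_keyL {x y a b : ℝ} (hx : 0 < x) (hxy : x ≤ y) (hy : y < 1) (hb : 0 < b)
    (hba : b ≤ a) :
    (1 - x ^ a) * (1 - y ^ b) ≤ (1 - x ^ b) * (1 - y ^ a) := by
  have hy0 : 0 < y := hx.trans_le hxy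
  set k := a / b with hkdef
  have hk : 1 ≤ k := (one_le_div hb).mpr hba
  have hbk : b * k = a := by rw [hkdef, mul_comm]; exact div_mul_cancel₀ a hb.ne'
  have hxa : x ^ a = (x ^ b) ^ k := by rw [← Real.rpow_mul hx.le, hbk]
  have hya : y ^ a = (y ^ b) ^ k := by rw [← Real.rpow_mul hy0.le, hbk]
  set u := x ^ b with hudef
  set v := y ^ b with hvdef
  have hu0 : 0 < u := Real.rpow_pos_of_pos hx b
  have hv0 : 0 < v := Real.rpow_pos_of_pos hy0 b
  have huv : u ≤ v := Real.rpow_le_rpow hx.le hxy hb.le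
  have hv1 : v < 1 := Real.rpow_lt_one hy0.le hy hb
  have hu1 : u < 1 := lt_of_le_of_lt huv hv1
  have hsec := (convexOn_rpow hk).secant_mono (a := 1) (x := u) (y := v)
      (by simp) (le_of_lt hu0) (le_of_lt hv0) (ne_of_lt hu1) (ne_of_lt hv1) huv
  simp only [Real.one_rpow] at hsec
  have h1u : 0 < 1 - u := by linarith
  have h1v : 0 < 1 - v := by linarith
  have h2 : (1 - u ^ k) / (1 - u) ≤ (1 - v ^ k) / (1 - v) := by
    rw [show 1 - u ^ k = -(u ^ k - 1) by ring, show (1:ℝ) - u = -(u - 1) by ring,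
        show 1 - v ^ k = -(v ^ k - 1) by ring, show (1:ℝ) - v = -(v - 1) by ring,
        neg_div_neg_eq, neg_div_neg_eq]
    exact hsec
  rw [div_le_div_iff₀ h1u h1v] at h2
  rw [hxa, hya]
  nlinarith [h2]

lemma bdsiw_chain_aux {p q r s x y : ℝ} (hx : 0 < x) (hy : 0 < y) (hq : 0 ≤ q) (hs : 0 ≤ s)
    (h1 : x * q ≤ p * y) (h2 : r * y ≤ x * s) : r * q ≤ p * s := by
  have h3 : (r * y) * (x * q) ≤ (x * s) * (p * y) :=
    mul_le_mul h2 h1 (mul_nonneg hx.le hq) (mul_nonneg hx.le hs)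
  have h4 : (x * y) * (r * q) ≤ (x * y) * (p * s) := by
    calc (x * y) * (r * q) = (r * y) * (x * q) := by ring
      _ ≤ (x * s) * (p * y) := h3
      _ = (x * y) * (p * s) := by ring
  exact le_of_mul_le_mul_left h4 (mul_pos hx hy)

lemma bdsiw_chain_aux' {p q r s x y : ℝ} (hx : 0 < x) (hy : 0 < y) (hq : 0 ≤ q) (hp : 0 ≤ p)
    (h1 : r * x ≤ p * y) (h2 : y * q ≤ x * s) : r * q ≤ p * s := by
  have h3 : (r * x) * (y * q) ≤ (p * y) * (x * s) :=
    mul_le_mul h1 h2 (mul_nonneg hy.le hq) (mul_nonneg hp hy.le)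
  have h4 : (x * y) * (r * q) ≤ (x * y) * (p * s) := by
    calc (x * y) * (r * q) = (r * x) * (y * q) := by ring
      _ ≤ (p * y) * (x * s) := h3
      _ = (x * y) * (p * s) := by ring
  exact le_of_mul_le_mul_left h4 (mul_pos hx hy)

/-- Abstract form of the BDsIW survival function with real "exponent arguments". -/
noncomputable def bdsiwS (θ₁ θ₂ θ₃ a b : ℝ) : ℝ :=
  1 - (θ₁ * θ₃) ^ a - (θ₂ * θ₃) ^ b + θ₁ ^ a * θ₂ ^ b * θ₃ ^ (max a b)

lemma bdsiwS_pos {θ₁ θ₂ θ₃ : ℝ} (h₁0 : 0 < θ₁) (h₁1 : θ₁ < 1) (h₂0 : 0 < θ₂) (h₂1 : θ₂ < 1)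
    (h₃0 : 0 < θ₃) (h₃1 : θ₃ < 1) {a b : ℝ} (ha : 0 < a) (hb : 0 < b) :
    0 < bdsiwS θ₁ θ₂ θ₃ a b := by
  unfold bdsiwS
  rcases le_total b a with h | h
  · rw [max_eq_left h, Real.mul_rpow h₁0.le h₃0.le, Real.mul_rpow h₂0.le h₃0.le]
    have hα1 : θ₁ ^ a < 1 := Real.rpow_lt_one h₁0.le h₁1 ha
    have hβ1 : θ₂ ^ b < 1 := Real.rpow_lt_one h₂0.le h₂1 hb
    have hγ0 : 0 < θ₃ ^ a := Real.rpow_pos_of_pos h₃0 a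
    have hα0 : 0 < θ₁ ^ a := Real.rpow_pos_of_pos h₁0 a
    have hβ0 : 0 < θ₂ ^ b := Real.rpow_pos_of_pos h₂0 b
    have hγδ : θ₃ ^ a ≤ θ₃ ^ b := Real.rpow_le_rpow_of_exponent_ge h₃0 h₃1.le h
    have hδ1 : θ₃ ^ b ≤ 1 := Real.rpow_le_one h₃0.le h₃1.le hb.le
    have hfin : θ₁ ^ a * θ₃ ^ a * (1 - θ₂ ^ b) < θ₃ ^ b * (1 - θ₂ ^ b) := by
      have : θ₁ ^ a * θ₃ ^ a < θ₃ ^ b :=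
        lt_of_lt_of_le (by nlinarith) hγδ
      nlinarith
    nlinarith [hfin]
  · rw [max_eq_right h, Real.mul_rpow h₁0.le h₃0.le, Real.mul_rpow h₂0.le h₃0.le]
    have hα1 : θ₁ ^ a < 1 := Real.rpow_lt_one h₁0.le h₁1 ha
    have hβ1 : θ₂ ^ b < 1 := Real.rpow_lt_one h₂0.le h₂1 hb
    have hδ0 : 0 < θ₃ ^ b := Real.rpow_pos_of_pos h₃0 b
    have hα0 : 0 < θ₁ ^ a := Real.rpow_pos_of_pos h₁0 a
    have hβ0 : 0 < θ₂ ^ b := Real.rpow_pos_of_pos h₂0 b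
    have hδγ : θ₃ ^ b ≤ θ₃ ^ a := Real.rpow_le_rpow_of_exponent_ge h₃0 h₃1.le h
    have hγ1 : θ₃ ^ a ≤ 1 := Real.rpow_le_one h₃0.le h₃1.le ha.le
    have hfin : θ₂ ^ b * θ₃ ^ b * (1 - θ₁ ^ a) < θ₃ ^ a * (1 - θ₁ ^ a) := by
      have : θ₂ ^ b * θ₃ ^ b < θ₃ ^ a :=
        lt_of_lt_of_le (by nlinarith) hδγ
      nlinarith
    nlinarith [hfin]

lemma bdsiwS_baseA {θ₁ θ₂ θ₃ : ℝ} (h₁0 : 0 < θ₁) (h₁1 : θ₁ < 1) (h₂0 : 0 < θ₂) (h₂1 : θ₂ < 1)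
    (h₃0 : 0 < θ₃) (h₃1 : θ₃ < 1) {a₁ a₂ b₁ b₂ : ℝ} (hb₂ : 0 < b₂) (hb : b₂ ≤ b₁)
    (hba : b₁ ≤ a₂) (ha : a₂ ≤ a₁) :
    bdsiwS θ₁ θ₂ θ₃ a₂ b₁ * bdsiwS θ₁ θ₂ θ₃ a₁ b₂ ≤
      bdsiwS θ₁ θ₂ θ₃ a₁ b₁ * bdsiwS θ₁ θ₂ θ₃ a₂ b₂ := by
  unfold bdsiwS
  rw [max_eq_left hba, max_eq_left ((hb.trans hba).trans ha), max_eq_left (hba.trans ha),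
      max_eq_left (hb.trans hba)]
  rw [show θ₁ ^ a₂ * θ₂ ^ b₁ * θ₃ ^ a₂ = (θ₁ * θ₃) ^ a₂ * θ₂ ^ b₁ by
        rw [Real.mul_rpow h₁0.le h₃0.le]; ring,
      show θ₁ ^ a₁ * θ₂ ^ b₂ * θ₃ ^ a₁ = (θ₁ * θ₃) ^ a₁ * θ₂ ^ b₂ by
        rw [Real.mul_rpow h₁0.le h₃0.le]; ring,
      show θ₁ ^ a₁ * θ₂ ^ b₁ * θ₃ ^ a₁ = (θ₁ * θ₃) ^ a₁ * θ₂ ^ b₁ by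
        rw [Real.mul_rpow h₁0.le h₃0.le]; ring,
      show θ₁ ^ a₂ * θ₂ ^ b₂ * θ₃ ^ a₂ = (θ₁ * θ₃) ^ a₂ * θ₂ ^ b₂ by
        rw [Real.mul_rpow h₁0.le h₃0.le]; ring]
  have hθ13 : 0 < θ₁ * θ₃ := mul_pos h₁0 h₃0
  have hθ13' : θ₁ * θ₃ ≤ 1 := le_of_lt (by nlinarith)
  have hc : (θ₁ * θ₃) ^ a₁ ≤ (θ₁ * θ₃) ^ a₂ :=
    Real.rpow_le_rpow_of_exponent_ge hθ13 hθ13' ha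
  have hK := bdsiw_keyL (x := θ₂ * θ₃) (y := θ₂) (a := b₁) (b := b₂)
    (mul_pos h₂0 h₃0) (by nlinarith) h₂1 hb₂ hb
  nlinarith [mul_nonneg (sub_nonneg.2 hc) (sub_nonneg.2 hK)]

lemma bdsiwS_baseB {θ₁ θ₂ θ₃ : ℝ} (h₁0 : 0 < θ₁) (h₁1 : θ₁ < 1) (h₂0 : 0 < θ₂) (h₂1 : θ₂ < 1)
    (h₃0 : 0 < θ₃) (h₃1 : θ₃ < 1) {a₁ a₂ b₁ b₂ : ℝ} (ha₂ : 0 < a₂) (ha : a₂ ≤ a₁)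
    (hab : a₁ ≤ b₂) (hb : b₂ ≤ b₁) :
    bdsiwS θ₁ θ₂ θ₃ a₂ b₁ * bdsiwS θ₁ θ₂ θ₃ a₁ b₂ ≤
      bdsiwS θ₁ θ₂ θ₃ a₁ b₁ * bdsiwS θ₁ θ₂ θ₃ a₂ b₂ := by
  unfold bdsiwS
  rw [max_eq_right ((ha.trans hab).trans hb), max_eq_right hab,
      max_eq_right (hab.trans hb), max_eq_right (ha.trans hab)]
  rw [show θ₁ ^ a₂ * θ₂ ^ b₁ * θ₃ ^ b₁ = (θ₂ * θ₃) ^ b₁ * θ₁ ^ a₂ by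
        rw [Real.mul_rpow h₂0.le h₃0.le]; ring,
      show θ₁ ^ a₁ * θ₂ ^ b₂ * θ₃ ^ b₂ = (θ₂ * θ₃) ^ b₂ * θ₁ ^ a₁ by
        rw [Real.mul_rpow h₂0.le h₃0.le]; ring,
      show θ₁ ^ a₁ * θ₂ ^ b₁ * θ₃ ^ b₁ = (θ₂ * θ₃) ^ b₁ * θ₁ ^ a₁ by
        rw [Real.mul_rpow h₂0.le h₃0.le]; ring,
      show θ₁ ^ a₂ * θ₂ ^ b₂ * θ₃ ^ b₂ = (θ₂ * θ₃) ^ b₂ * θ₁ ^ a₂ by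
        rw [Real.mul_rpow h₂0.le h₃0.le]; ring]
  have hθ23 : 0 < θ₂ * θ₃ := mul_pos h₂0 h₃0
  have hθ23' : θ₂ * θ₃ ≤ 1 := le_of_lt (by nlinarith)
  have hc : (θ₂ * θ₃) ^ b₁ ≤ (θ₂ * θ₃) ^ b₂ :=
    Real.rpow_le_rpow_of_exponent_ge hθ23 hθ23' hb
  have hK := bdsiw_keyL (x := θ₁ * θ₃) (y := θ₁) (a := a₁) (b := a₂)
    (mul_pos h₁0 h₃0) (by nlinarith) h₁1 ha₂ ha
  nlinarith [mul_nonneg (sub_nonneg.2 hc) (sub_nonneg.2 hK)]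

lemma bdsiwS_sq {θ₁ θ₂ θ₃ : ℝ} (h₁0 : 0 < θ₁) (h₁1 : θ₁ < 1) (h₂0 : 0 < θ₂) (h₂1 : θ₂ < 1)
    (h₃0 : 0 < θ₃) (h₃1 : θ₃ < 1) {a₁ a₂ : ℝ} (ha₂ : 0 < a₂) (ha : a₂ ≤ a₁) :
    bdsiwS θ₁ θ₂ θ₃ a₂ a₁ * bdsiwS θ₁ θ₂ θ₃ a₁ a₂ ≤
      bdsiwS θ₁ θ₂ θ₃ a₁ a₁ * bdsiwS θ₁ θ₂ θ₃ a₂ a₂ := by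
  unfold bdsiwS
  rw [max_eq_right ha, max_eq_left ha, max_self, max_self]
  simp only [Real.mul_rpow h₁0.le h₃0.le, Real.mul_rpow h₂0.le h₃0.le]
  set A := θ₁ ^ a₁ with hA
  set A' := θ₁ ^ a₂ with hA'
  set B := θ₂ ^ a₁ with hB
  set B' := θ₂ ^ a₂ with hB'
  set G := θ₃ ^ a₁ with hG
  set G' := θ₃ ^ a₂ with hG'
  have hA0 : 0 < A := Real.rpow_pos_of_pos h₁0 a₁
  have hB0 : 0 < B := Real.rpow_pos_of_pos h₂0 a₁
  have hG0 : 0 < G := Real.rpow_pos_of_pos h₃0 a₁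
  have hAA' : A ≤ A' := Real.rpow_le_rpow_of_exponent_ge h₁0 h₁1.le ha
  have hBB' : B ≤ B' := Real.rpow_le_rpow_of_exponent_ge h₂0 h₂1.le ha
  have hGG' : G ≤ G' := Real.rpow_le_rpow_of_exponent_ge h₃0 h₃1.le ha
  have hA'1 : A' ≤ 1 := Real.rpow_le_one h₁0.le h₁1.le ha₂.le
  have hB'1 : B' ≤ 1 := Real.rpow_le_one h₂0.le h₂1.le ha₂.le
  have hG'1 : G' ≤ 1 := Real.rpow_le_one h₃0.le h₃1.le ha₂.le
  have h1 : 0 ≤ (1 - G') * ((G' - G) * (A' * B')) := by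
    apply mul_nonneg (by linarith)
    exact mul_nonneg (by linarith) (mul_nonneg (by linarith) (by linarith))
  have h2 : 0 ≤ (1 - G') * (G * ((A' - A) * (B' - B))) := by
    apply mul_nonneg (by linarith)
    exact mul_nonneg hG0.le (mul_nonneg (by linarith) (by linarith))
  have h3 : 0 ≤ ((G' - G) * G) * ((A * B) * ((1 - A') * (1 - B'))) := by
    apply mul_nonneg (mul_nonneg (by linarith) hG0.le)
    exact mul_nonneg (mul_nonneg hA0.le hB0.le) (mul_nonneg (by linarith) (by linarith))
  nlinarith [h1, h2, h3]

lemma bdsiwS_TP2 {θ₁ θ₂ θ₃ : ℝ} (h₁0 : 0 < θ₁) (h₁1 : θ₁ < 1) (h₂0 : 0 < θ₂) (h₂1 : θ₂ < 1)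
    (h₃0 : 0 < θ₃) (h₃1 : θ₃ < 1) {a₁ a₂ b₁ b₂ : ℝ} (ha₂ : 0 < a₂) (ha : a₂ ≤ a₁)
    (hb₂ : 0 < b₂) (hb : b₂ ≤ b₁) :
    bdsiwS θ₁ θ₂ θ₃ a₂ b₁ * bdsiwS θ₁ θ₂ θ₃ a₁ b₂ ≤
      bdsiwS θ₁ θ₂ θ₃ a₁ b₁ * bdsiwS θ₁ θ₂ θ₃ a₂ b₂ := by
  have ha₁ : 0 < a₁ := lt_of_lt_of_le ha₂ ha
  have hb₁ : 0 < b₁ := lt_of_lt_of_le hb₂ hb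
  have P : ∀ {x y : ℝ}, 0 < x → 0 < y → 0 < bdsiwS θ₁ θ₂ θ₃ x y :=
    fun hx hy => bdsiwS_pos h₁0 h₁1 h₂0 h₂1 h₃0 h₃1 hx hy
  rcases le_total b₁ a₂ with h | h
  · exact bdsiwS_baseA h₁0 h₁1 h₂0 h₂1 h₃0 h₃1 hb₂ hb h ha
  rcases le_total a₁ b₂ with h' | h'
  · exact bdsiwS_baseB h₁0 h₁1 h₂0 h₂1 h₃0 h₃1 ha₂ ha h' hb
  -- now a₂ ≤ b₁ and b₂ ≤ a₁
  rcases le_total b₁ a₁ with hca | hca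
  · rcases le_total b₂ a₂ with hcb | hcb
    · -- case C : b₂ ≤ a₂ ≤ b₁ ≤ a₁
      refine bdsiw_chain_aux (P hb₁ hb₁) (P hb₁ hb₂) (P ha₁ hb₂).le (P ha₂ hb₂).le
        (bdsiwS_baseA h₁0 h₁1 h₂0 h₂1 h₃0 h₃1 hb₂ hb le_rfl hca) ?_
      -- ineq (b₁, a₂, b₁, b₂) : chain in second coordinate through a₂
      exact bdsiw_chain_aux' (P hb₁ ha₂) (P ha₂ ha₂) (P hb₁ hb₂).le (P hb₁ hb₁).le
        (bdsiwS_sq h₁0 h₁1 h₂0 h₂1 h₃0 h₃1 ha₂ h)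
        (bdsiwS_baseA h₁0 h₁1 h₂0 h₂1 h₃0 h₃1 hb₂ hcb le_rfl h)
    · -- case D : a₂ ≤ b₂ ≤ b₁ ≤ a₁
      refine bdsiw_chain_aux (P hb₁ hb₁) (P hb₁ hb₂) (P ha₁ hb₂).le (P ha₂ hb₂).le
        (bdsiwS_baseA h₁0 h₁1 h₂0 h₂1 h₃0 h₃1 hb₂ hb le_rfl hca) ?_
      -- ineq (b₁, a₂, b₁, b₂) : chain in first coordinate through b₂
      exact bdsiw_chain_aux (P hb₂ hb₁) (P hb₂ hb₂) (P hb₁ hb₂).le (P ha₂ hb₂).le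
        (bdsiwS_sq h₁0 h₁1 h₂0 h₂1 h₃0 h₃1 hb₂ hb)
        (bdsiwS_baseB h₁0 h₁1 h₂0 h₂1 h₃0 h₃1 ha₂ hcb le_rfl hb)
  · rcases le_total b₂ a₂ with hcb | hcb
    · -- case E : b₂ ≤ a₂ ≤ a₁ ≤ b₁
      refine bdsiw_chain_aux' (P ha₁ ha₁) (P ha₂ ha₁) (P ha₁ hb₂).le (P ha₁ hb₁).le
        (bdsiwS_baseB h₁0 h₁1 h₂0 h₂1 h₃0 h₃1 ha₂ ha le_rfl hca) ?_
      -- ineq (a₁, a₂, a₁, b₂) : chain in second coordinate through a₂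
      exact bdsiw_chain_aux' (P ha₁ ha₂) (P ha₂ ha₂) (P ha₁ hb₂).le (P ha₁ ha₁).le
        (bdsiwS_sq h₁0 h₁1 h₂0 h₂1 h₃0 h₃1 ha₂ ha)
        (bdsiwS_baseA h₁0 h₁1 h₂0 h₂1 h₃0 h₃1 hb₂ hcb le_rfl ha)
    · -- case F : a₂ ≤ b₂ ≤ a₁ ≤ b₁
      refine bdsiw_chain_aux' (P ha₁ ha₁) (P ha₂ ha₁) (P ha₁ hb₂).le (P ha₁ hb₁).le
        (bdsiwS_baseB h₁0 h₁1 h₂0 h₂1 h₃0 h₃1 ha₂ ha le_rfl hca) ?_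
      -- ineq (a₁, a₂, a₁, b₂) : chain in first coordinate through b₂
      exact bdsiw_chain_aux (P hb₂ ha₁) (P hb₂ hb₂) (P ha₁ hb₂).le (P ha₂ hb₂).le
        (bdsiwS_sq h₁0 h₁1 h₂0 h₂1 h₃0 h₃1 hb₂ h')
        (bdsiwS_baseB h₁0 h₁1 h₂0 h₂1 h₃0 h₃1 ha₂ hcb le_rfl h')

/-- The joint survival function of the BDsIW distribution is totally positive of
order two: `R(u₁,v₁) R(u₂,v₂) ≥ R(u₂,v₁) R(u₁,v₂)` whenever `u₁ ≤ u₂`, `v₁ ≤ v₂`. -/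
theorem bdsiw_survival_TP2 (θ₁ θ₂ θ₃ ζ : ℝ)
    (hθ₁ : θ₁ ∈ Set.Ioo (0:ℝ) 1) (hθ₂ : θ₂ ∈ Set.Ioo (0:ℝ) 1)
    (hθ₃ : θ₃ ∈ Set.Ioo (0:ℝ) 1) (hζ : 0 < ζ)
    (u₁ u₂ v₁ v₂ : ℕ) (hu : u₁ ≤ u₂) (hv : v₁ ≤ v₂) :
    bdsiwSurvival θ₁ θ₂ θ₃ ζ u₂ v₁ * bdsiwSurvival θ₁ θ₂ θ₃ ζ u₁ v₂
      ≤ bdsiwSurvival θ₁ θ₂ θ₃ ζ u₁ v₁ * bdsiwSurvival θ₁ θ₂ θ₃ ζ u₂ v₂ := by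
  obtain ⟨h₁0, h₁1⟩ := hθ₁
  obtain ⟨h₂0, h₂1⟩ := hθ₂
  obtain ⟨h₃0, h₃1⟩ := hθ₃
  have hmono : ∀ {x y : ℕ}, x ≤ y → ((y:ℝ) + 1) ^ (-ζ) ≤ ((x:ℝ) + 1) ^ (-ζ) := by
    intro x y hxy
    exact Real.rpow_le_rpow_of_nonpos (by positivity)
      (by have := (Nat.cast_le (α := ℝ)).2 hxy; linarith) (neg_nonpos.2 hζ.le)
  have hpos : ∀ x : ℕ, (0:ℝ) < ((x:ℝ) + 1) ^ (-ζ) := fun x =>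
    Real.rpow_pos_of_pos (by positivity) _
  have hs : ∀ x y : ℕ, bdsiwSurvival θ₁ θ₂ θ₃ ζ x y =
      bdsiwS θ₁ θ₂ θ₃ (((x:ℝ) + 1) ^ (-ζ)) (((y:ℝ) + 1) ^ (-ζ)) := by
    intro x y
    unfold bdsiwSurvival bdsiwS dsiwCDF
    have : (((min x y : ℕ):ℝ) + 1) ^ (-ζ) =
        max (((x:ℝ) + 1) ^ (-ζ)) (((y:ℝ) + 1) ^ (-ζ)) := by
      rcases le_total x y with h | h
      · rw [min_eq_left h, max_eq_left (hmono h)]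
      · rw [min_eq_right h, max_eq_right (hmono h)]
    rw [this]
  rw [hs, hs, hs, hs]
  exact bdsiwS_TP2 h₁0 h₁1 h₂0 h₂1 h₃0 h₃1 (hpos u₂) (hmono hu) (hpos v₂) (hmono hv)
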